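/- For every real number q ≥ −1, the 3×3 real matrix A = [[−1, 0, q], [−1, −1, 0], [−1, −1, −1]] is D-stable. -/
import Mathlib


open Matrix

/-- A real matrix is Hurwitz stable if every complex eigenvalue has negative real part. -/
def IsHurwitzStable {m : ℕ} (A : Matrix (Fin m) (Fin m) ℝ) : Prop :=
  ∀ μ ∈ spectrum ℂ (A.map (Complex.ofReal : ℝ → ℂ)), μ.re < 0

/-- A real matrix is D-stable if `D * A` is Hurwitz stable for every positive diagonal `D`. -/
def IsDStable {m : ℕ} (A : Matrix (Fin m) (Fin m) ℝ) : Prop :=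
  ∀ d : Fin m → ℝ, (∀ i, 0 < d i) → IsHurwitzStable (Matrix.diagonal d * A)

/-- Routh–Hurwitz criterion for a real cubic: if `p, r, s > 0` and `s < p*r`, then every
complex root of `X^3 + p X^2 + r X + s` has negative real part. -/
lemma cubic_root_re_neg (p r s : ℝ) (hp : 0 < p) (hr : 0 < r) (hs : 0 < s)
    (hprs : s < p * r) (μ : ℂ) (h : μ^3 + p*μ^2 + r*μ + s = 0) : μ.re < 0 := by
  set x := μ.re with hx
  set y := μ.im with hy
  have hre : x^3 - 3*x*y^2 + p*(x^2 - y^2) + r*x + s = 0 := by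
    have := congrArg Complex.re h
    simp [pow_succ, Complex.add_re, Complex.mul_re, Complex.mul_im] at this
    nlinarith [this]
  have him : y * (3*x^2 - y^2 + 2*p*x + r) = 0 := by
    have := congrArg Complex.im h
    simp [pow_succ, Complex.add_im, Complex.mul_re, Complex.mul_im] at this
    nlinarith [this]
  by_contra hx0
  push_neg at hx0
  rcases mul_eq_zero.1 him with hy0 | heq
  · rw [hy0] at hre
    nlinarith [pow_nonneg hx0 3, mul_nonneg hp.le (sq_nonneg x), mul_nonneg hr.le hx0]
  · have key : 8*x^3 + 8*p*x^2 + 2*(r+p^2)*x + (p*r - s) = 0 := by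
      linear_combination -hre + (3*x+p)*heq
    nlinarith [pow_nonneg hx0 3, mul_nonneg hp.le (sq_nonneg x), mul_nonneg hr.le hx0,
      mul_nonneg (mul_nonneg hp.le hp.le) hx0]

/-- For every `q ≥ -1`, the matrix `[[-1,0,q],[-1,-1,0],[-1,-1,-1]]` is D-stable. -/
theorem example_three_by_three_isDStable (q : ℝ) (hq : q ≥ -1) :
    IsDStable !![-1, 0, q; -1, -1, 0; -1, -1, -1] := by
  intro d hd μ hμ
  have ha := hd 0
  have hb := hd 1
  have hc := hd 2
  -- characteristic equation
  have hcube : μ^3 + (d 0 + d 1 + d 2 : ℝ)*μ^2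
      + (d 0 * d 1 + d 1 * d 2 + d 0 * d 2 + d 0 * d 2 * q : ℝ)*μ
      + (d 0 * d 1 * d 2 : ℝ) = 0 := by
    rw [spectrum.mem_iff] at hμ
    have hdet : (algebraMap ℂ (Matrix (Fin 3) (Fin 3) ℂ) μ -
        ((Matrix.diagonal d * !![-1, 0, q; -1, -1, 0; -1, -1, -1])).map
          (Complex.ofReal : ℝ → ℂ)).det = 0 := by
      by_contra h0
      exact hμ ((Matrix.isUnit_iff_isUnit_det _).2 (Ne.isUnit h0))
    simp [Matrix.det_fin_three, Matrix.algebraMap_matrix_apply, Matrix.mul_apply,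
      Fin.sum_univ_three, Matrix.diagonal, Matrix.map_apply, Matrix.vecHead,
      Matrix.vecTail] at hdet
    push_cast at hdet ⊢
    linear_combination hdet
  refine cubic_root_re_neg _ _ _ (by linarith) ?_ (by positivity) ?_ μ hcube
  · nlinarith [mul_pos ha hb, mul_pos hb hc, mul_nonneg (mul_nonneg ha.le hc.le)
      (by linarith : (0:ℝ) ≤ 1 + q)]
  · nlinarith [mul_pos (mul_pos ha ha) hb, mul_pos (mul_pos ha hb) hb,
      mul_pos (mul_pos ha hb) hc, mul_pos (mul_pos hb hb) hc,
      mul_pos (mul_pos hb hc) hc,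
      mul_nonneg (mul_nonneg (mul_nonneg ha.le hc.le) (by linarith : (0:ℝ) ≤ 1 + q))
        (by positivity : (0:ℝ) ≤ d 0 + d 1 + d 2)]
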